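/- Let p be a prime, d ≥ 1 an integer, F the free group on d generators, and F_2 = F^p[F,F] the second term of the lower p-series of F. Then F_2 is a maximal fully invariant subgroup of F: F_2 is fully invariant, F_2 ≠ F, and every fully invariant subgroup U of F with F_2 < U satisfies U = F. -/

import Mathlib

/-- `pStep p H = H^p [H, G]`: the subgroup generated by all `p`-th powers of elements of `H`
together with all commutators `[x, y]` with `x ∈ H` and `y ∈ G`. -/
def pStep (p : ℕ) {G : Type*} [Group G] (H : Subgroup G) : Subgroup G :=
  Subgroup.closure ((fun g => g ^ p) '' (H : Set G)) ⊔ ⁅H, (⊤ : Subgroup G)⁆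

private def lowerPSeriesAux (p : ℕ) (G : Type*) [Group G] : ℕ → Subgroup G
  | 0 => ⊤
  | (k + 1) => pStep p (lowerPSeriesAux p G k)

/-- The lower `p`-series of `G`, indexed as in the paper: `G_1 = G` and
`G_{i+1} = G_i^p [G_i, G]`.  (The value at `0` is junk, equal to `G_1 = G`.) -/
def lowerPSeries (p : ℕ) (G : Type*) [Group G] (i : ℕ) : Subgroup G :=
  lowerPSeriesAux p G (i - 1)

theorem pStep_le (p : ℕ) {G : Type*} [Group G] {H : Subgroup G} (hH : H.Normal) :
    pStep p H ≤ H := by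
  apply sup_le
  · rw [Subgroup.closure_le]
    rintro _ ⟨h, hh, rfl⟩
    exact H.pow_mem hh p
  · exact Subgroup.commutator_le_left H ⊤

open scoped commutatorElement in
theorem pStep_normal (p : ℕ) {G : Type*} [Group G] {H : Subgroup G} (hH : H.Normal) :
    (pStep p H).Normal := by
  constructor
  intro x hx g
  have hxH : x ∈ H := pStep_le p hH hx
  have : g * x * g⁻¹ = ⁅g, x⁆ * x := by group
  rw [this]
  refine Subgroup.mul_mem _ ?_ hx
  refine le_sup_right (α := Subgroup G) ?_
  have hcomm : (⁅(⊤ : Subgroup G), H⁆ : Subgroup G) = ⁅H, (⊤ : Subgroup G)⁆ :=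
    Subgroup.commutator_comm ⊤ H
  rw [← hcomm]
  exact Subgroup.commutator_mem_commutator (Subgroup.mem_top g) hxH

instance lowerPSeries_normal (p : ℕ) (G : Type*) [Group G] (i : ℕ) :
    (lowerPSeries p G i).Normal := by
  rw [lowerPSeries]
  generalize i - 1 = k
  induction k with
  | zero => show (⊤ : Subgroup G).Normal; infer_instance
  | succ k ih => exact pStep_normal p ih

/-- A group is minimally generated by `d` elements if it is generated by some `d` elements
but by no fewer. -/
def MinGenBy (G : Type*) [Group G] (d : ℕ) : Prop :=
  (∃ S : Finset G, S.card = d ∧ Subgroup.closure (S : Set G) = ⊤) ∧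
    ∀ S : Finset G, Subgroup.closure (S : Set G) = ⊤ → d ≤ S.card

/-- A subgroup is fully invariant if every endomorphism of the group maps it into itself. -/
def FullyInvariant {G : Type*} [Group G] (U : Subgroup G) : Prop :=
  ∀ φ : G →* G, Subgroup.map φ U ≤ U

/-! ### Auxiliary material -/

section AuxStuff

variable (p : ℕ) {G : Type*} [Group G]

theorem mem_pStep_pow (g : G) : g ^ p ∈ pStep p (⊤ : Subgroup G) :=
  (le_sup_left : _ ≤ pStep p (⊤ : Subgroup G))
    (Subgroup.subset_closure ⟨g, Subgroup.mem_top g, rfl⟩)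

open scoped commutatorElement in
theorem mem_pStep_comm (x y : G) : ⁅x, y⁆ ∈ pStep p (⊤ : Subgroup G) :=
  (le_sup_right : _ ≤ pStep p (⊤ : Subgroup G))
    (Subgroup.commutator_mem_commutator (Subgroup.mem_top x) (Subgroup.mem_top y))

end AuxStuff

/-- The mod-`p` exponent-sum homomorphism from the free group to `(ℤ/p)^d`. -/
def phiHom (p d : ℕ) : FreeGroup (Fin d) →* Multiplicative (Fin d → ZMod p) :=
  FreeGroup.lift fun i => Multiplicative.ofAdd (Pi.single i 1)

theorem phiHom_of (p d : ℕ) (i : Fin d) :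
    phiHom p d (FreeGroup.of i) = Multiplicative.ofAdd (Pi.single i 1) :=
  FreeGroup.lift_apply_of

theorem F2_le_ker (p d : ℕ) :
    pStep p (⊤ : Subgroup (FreeGroup (Fin d))) ≤ (phiHom p d).ker := by
  have hz : ∀ x : Multiplicative (Fin d → ZMod p), x ^ p = 1 := by
    intro x
    rw [← ofAdd_toAdd x, ← ofAdd_nsmul]
    have : p • Multiplicative.toAdd x = 0 := by
      funext i
      simp [nsmul_eq_mul, ZMod.natCast_self]
    rw [this]; rfl
  apply sup_le
  · rw [Subgroup.closure_le]
    rintro _ ⟨g, -, rfl⟩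
    simp only [SetLike.mem_coe, MonoidHom.mem_ker, map_pow]
    exact hz _
  · rw [Subgroup.commutator_le]
    intro x _ y _
    rw [MonoidHom.mem_ker, map_commutatorElement]
    exact commutatorElement_eq_one_iff_mul_comm.mpr (mul_comm _ _)

open scoped commutatorElement in
theorem ker_le_F2 (p d : ℕ) :
    (phiHom p d).ker ≤ pStep p (⊤ : Subgroup (FreeGroup (Fin d))) := by
  set N := pStep p (⊤ : Subgroup (FreeGroup (Fin d))) with hN
  haveI hNn : N.Normal := pStep_normal p (by infer_instance)
  letI : CommGroup (FreeGroup (Fin d) ⧸ N) :=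
    { (inferInstance : Group (FreeGroup (Fin d) ⧸ N)) with
      mul_comm := by
        intro a b
        obtain ⟨x, rfl⟩ := QuotientGroup.mk_surjective a
        obtain ⟨y, rfl⟩ := QuotientGroup.mk_surjective b
        rw [← QuotientGroup.mk_mul, ← QuotientGroup.mk_mul, QuotientGroup.eq]
        have hc : (x * y)⁻¹ * (y * x) = ⁅y⁻¹, x⁻¹⁆ := by group
        rw [hc]
        exact mem_pStep_comm p _ _ }
  set π : FreeGroup (Fin d) →* FreeGroup (Fin d) ⧸ N := QuotientGroup.mk' N with hπ
  have hpow : ∀ q : FreeGroup (Fin d) ⧸ N, q ^ p = 1 := by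
    intro q
    obtain ⟨x, rfl⟩ := QuotientGroup.mk_surjective q
    have : ((x ^ p : FreeGroup (Fin d)) : FreeGroup (Fin d) ⧸ N) = 1 :=
      (QuotientGroup.eq_one_iff _).mpr (mem_pStep_pow p x)
    simpa using this
  set a : Fin d → Additive (FreeGroup (Fin d) ⧸ N) :=
    fun i => Additive.ofMul (π (FreeGroup.of i)) with ha
  have haz : ∀ i, (p : ℤ) • a i = 0 := by
    intro i
    show Additive.ofMul ((π (FreeGroup.of i)) ^ (p : ℤ)) = 0
    rw [zpow_natCast, hpow]; rfl
  set f : Fin d → (ZMod p →+ Additive (FreeGroup (Fin d) ⧸ N)) :=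
    fun i => ZMod.lift p ⟨zmultiplesHom _ (a i), by simpa using haz i⟩ with hf
  set ψ : (Fin d → ZMod p) →+ Additive (FreeGroup (Fin d) ⧸ N) :=
    ∑ i : Fin d, (f i).comp (Pi.evalAddMonoidHom (fun _ => ZMod p) i) with hψ
  set Ψ : Multiplicative (Fin d → ZMod p) →* FreeGroup (Fin d) ⧸ N :=
    AddMonoidHom.toMultiplicativeLeft ψ with hΨ
  have key : Ψ.comp (phiHom p d) = π := by
    apply FreeGroup.ext_hom
    intro i
    show Ψ (phiHom p d (FreeGroup.of i)) = π (FreeGroup.of i)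
    rw [phiHom_of]
    show Additive.toMul (ψ (Pi.single i 1)) = π (FreeGroup.of i)
    have hev : ψ (Pi.single i 1) = ∑ t : Fin d, f t ((Pi.single i (1 : ZMod p) : Fin d → ZMod p) t) := by
      rw [hψ]; simp [AddMonoidHom.finset_sum_apply]
    rw [hev, Finset.sum_eq_single i]
    · rw [Pi.single_eq_same]
      have h1 : (1 : ZMod p) = ((1 : ℤ) : ZMod p) := by simp
      rw [h1, hf]
      rw [ZMod.lift_coe]
      show Additive.toMul ((1 : ℤ) • a i) = π (FreeGroup.of i)
      rw [one_zsmul]; rfl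
    · intro t _ ht
      rw [Pi.single_eq_of_ne ht, map_zero]
    · intro h; exact absurd (Finset.mem_univ i) h
  intro u hu
  have h2 : Ψ (phiHom p d u) = π u := DFunLike.congr_fun key u
  rw [MonoidHom.mem_ker] at hu
  rw [hu, map_one] at h2
  exact (QuotientGroup.eq_one_iff u).mp h2.symm

/-- **Proposition: `F₂ = F^p[F,F]` is a maximal fully invariant subgroup of the free group
`F` on `d ≥ 1` generators.** -/
theorem second_lowerPSeries_maximal_fully_invariant (p d : ℕ) (hp : p.Prime) (hd : 1 ≤ d) :
    let F := FreeGroup (Fin d)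
    FullyInvariant (lowerPSeries p F 2) ∧
      lowerPSeries p F 2 ≠ ⊤ ∧
      ∀ U : Subgroup F, FullyInvariant U → lowerPSeries p F 2 < U → U = ⊤ := by
  intro F
  haveI : Fact p.Prime := ⟨hp⟩
  haveI : NeZero p := ⟨hp.pos.ne'⟩
  have h2 : lowerPSeries p F 2 = pStep p (⊤ : Subgroup F) := rfl
  refine ⟨?_, ?_, ?_⟩
  · -- fully invariant
    intro φ
    rw [h2, pStep, Subgroup.map_sup, MonoidHom.map_closure, Subgroup.map_commutator]
    apply sup_le
    · refine le_trans (Subgroup.closure_mono ?_) le_sup_left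
      rintro _ ⟨_, ⟨g, -, rfl⟩, rfl⟩
      exact ⟨φ g, Subgroup.mem_top _, (map_pow φ g p).symm⟩
    · exact le_trans (Subgroup.commutator_mono le_top le_top) le_sup_right
  · -- not top
    rw [h2]
    intro htop
    set i0 : Fin d := ⟨0, hd⟩
    have hmem0 : FreeGroup.of i0 ∈ pStep p (⊤ : Subgroup F) := by
      rw [htop]; exact Subgroup.mem_top _
    have hmem : FreeGroup.of i0 ∈ (phiHom p d).ker := F2_le_ker p d hmem0
    rw [MonoidHom.mem_ker, phiHom_of] at hmem
    have h0 := congrFun (congrArg Multiplicative.toAdd hmem) i0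
    simp at h0
  · -- maximality
    intro U hU hlt
    rw [h2] at hlt
    have hF2U : pStep p (⊤ : Subgroup F) ≤ U := hlt.le
    obtain ⟨u, huU, huN⟩ := SetLike.exists_of_lt hlt
    have hker : phiHom p d u ≠ 1 := fun h => huN (ker_le_F2 p d h)
    set v := Multiplicative.toAdd (phiHom p d u) with hv
    have hvne : v ≠ 0 := by
      intro h
      apply hker
      have : phiHom p d u = Multiplicative.ofAdd v := rfl
      rw [this, h]; rfl
    obtain ⟨j, hj⟩ := Function.ne_iff.mp hvne
    simp only [Pi.zero_apply] at hj
    set πj : F →* Multiplicative ℤ :=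
      FreeGroup.lift fun t => Multiplicative.ofAdd (if t = j then (1 : ℤ) else 0) with hπj
    set m : ℤ := Multiplicative.toAdd (πj u) with hm'
    -- relate m mod p with v j
    have hcomp :
        ((AddMonoidHom.toMultiplicative (Int.castAddHom (ZMod p))).comp πj) =
        ((AddMonoidHom.toMultiplicative (Pi.evalAddMonoidHom (fun _ : Fin d => ZMod p) j)).comp
          (phiHom p d)) := by
      apply FreeGroup.ext_hom
      intro t
      have hL : ((AddMonoidHom.toMultiplicative (Int.castAddHom (ZMod p))).comp πj)
          (FreeGroup.of t)
          = Multiplicative.ofAdd (((if t = j then (1 : ℤ) else 0) : ℤ) : ZMod p) := by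
        rw [MonoidHom.comp_apply, hπj, FreeGroup.lift_apply_of]; rfl
      have hR : ((AddMonoidHom.toMultiplicative
            (Pi.evalAddMonoidHom (fun _ : Fin d => ZMod p) j)).comp (phiHom p d))
          (FreeGroup.of t)
          = Multiplicative.ofAdd ((Pi.single t (1 : ZMod p) : Fin d → ZMod p) j) := by
        rw [MonoidHom.comp_apply, phiHom_of]; rfl
      rw [hL, hR]
      congr 1
      by_cases h : t = j
      · subst h; simp
      · simp [h, Pi.single_eq_of_ne (fun hh => h hh.symm)]
    have hm : ((m : ℤ) : ZMod p) = v j := by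
      have := DFunLike.congr_fun hcomp u
      have h3 : Multiplicative.ofAdd ((m : ℤ) : ZMod p) = Multiplicative.ofAdd (v j) := this
      exact Multiplicative.ofAdd.injective h3
    set k : ℤ := (((v j)⁻¹ : ZMod p).val : ℤ) with hk'
    have hk : ((k * m : ℤ) : ZMod p) = 1 := by
      push_cast [hm]
      rw [hk', Int.cast_natCast, ZMod.natCast_val, ZMod.cast_id]
      exact inv_mul_cancel₀ hj
    obtain ⟨t, ht⟩ : ∃ t : ℤ, k * m = 1 + (p : ℤ) * t := by
      have hz : ((k * m - 1 : ℤ) : ZMod p) = 0 := by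
        rw [Int.cast_sub, Int.cast_one, hk, sub_self]
      obtain ⟨t, ht⟩ := (ZMod.intCast_zmod_eq_zero_iff_dvd _ _).mp hz
      exact ⟨t, by linarith⟩
    have hgen : ∀ i : Fin d, FreeGroup.of i ∈ U := by
      intro i
      set e : F →* F := (zpowersHom F (FreeGroup.of i ^ k)).comp πj with he
      have heu : e u ∈ U := hU e ⟨u, huU, rfl⟩
      have heq : e u = FreeGroup.of i ^ (k * m) := by
        show (zpowersHom F (FreeGroup.of i ^ k)) (πj u) = _
        rw [zpowersHom_apply, ← hm', ← zpow_mul]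
      have hpt : FreeGroup.of i ^ ((p : ℤ) * t) ∈ U := by
        rw [zpow_mul, zpow_natCast]
        exact U.zpow_mem (hF2U (mem_pStep_pow p _)) t
      have hfin : FreeGroup.of i = e u * (FreeGroup.of i ^ ((p : ℤ) * t))⁻¹ := by
        rw [heq, ht, zpow_add, zpow_one]
        group
      rw [hfin]
      exact U.mul_mem heu (U.inv_mem hpt)
    rw [eq_top_iff, ← FreeGroup.closure_range_of (Fin d)]
    rw [Subgroup.closure_le]
    rintro _ ⟨i, rfl⟩
    exact hgen i
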